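/- Let φ : ℂ² × ℂ² → ℂ be the standard skew-Hermitian symplectic form, φ(v, w) = −v₁·conj(w₂) + v₂·conj(w₁). Let a₀, a₁, a₂ ∈ ℂ² be isotropic vectors (φ(aᵢ, aᵢ) = 0) with a₁, a₂ linearly independent, and write a₀ = β₁·a₁ + β₂·a₂ with β₁, β₂ ∈ ℂ. Then the number f := −conj(β₁)·φ(a₀, a₁) is real, and f · |φ(a₁, a₂)|² = φ(a₀, a₁)·φ(a₁, a₂)·φ(a₂, a₀). In particular, the triple product φ(a₀, a₁)·φ(a₁, a₂)·φ(a₂, a₀) is real and has the same sign as f. -/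

import Mathlib

/-- The standard skew-Hermitian symplectic form on `ℂ²`:
`φ(v, w) = -v₁·conj(w₂) + v₂·conj(w₁)`. -/
noncomputable def stdForm (v w : Fin 2 → ℂ) : ℂ :=
  -(v 0 * (starRingEnd ℂ) (w 1)) + v 1 * (starRingEnd ℂ) (w 0)

private lemma stdForm_expand_left (v w u : Fin 2 → ℂ) (b c : ℂ) :
    stdForm (b • v + c • w) u = b * stdForm v u + c * stdForm w u := by
  simp only [stdForm, Pi.add_apply, Pi.smul_apply, smul_eq_mul]; ring

private lemma stdForm_expand_right (v w u : Fin 2 → ℂ) (b c : ℂ) :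
    stdForm u (b • v + c • w)
      = (starRingEnd ℂ) b * stdForm u v + (starRingEnd ℂ) c * stdForm u w := by
  simp only [stdForm, Pi.add_apply, Pi.smul_apply, smul_eq_mul, map_add, map_mul]; ring

private lemma stdForm_swap (v w : Fin 2 → ℂ) :
    stdForm w v = -(starRingEnd ℂ) (stdForm v w) := by
  simp only [stdForm, map_add, map_neg, map_mul, Complex.conj_conj]; ring

/-- Lemma 2.11 (concrete form): for isotropic `a₀, a₁, a₂ ∈ ℂ²` with `a₁, a₂`
linearly independent and `a₀ = β₁a₁ + β₂a₂`, the number `f = -conj(β₁)·φ(a₀,a₁)`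
is real, `f·|φ(a₁,a₂)|² = φ(a₀,a₁)·φ(a₁,a₂)·φ(a₂,a₀)`, and in particular the
triple product is real and has the same sign as `f`. -/
theorem wall_form_eq_triple_product (a₀ a₁ a₂ : Fin 2 → ℂ)
    (h₀ : stdForm a₀ a₀ = 0) (h₁ : stdForm a₁ a₁ = 0) (h₂ : stdForm a₂ a₂ = 0)
    (hli : LinearIndependent ℂ ![a₁, a₂]) (β₁ β₂ : ℂ)
    (hβ : a₀ = β₁ • a₁ + β₂ • a₂) :
    ∃ r s : ℝ,
      -(starRingEnd ℂ) β₁ * stdForm a₀ a₁ = (r : ℂ) ∧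
      stdForm a₀ a₁ * stdForm a₁ a₂ * stdForm a₂ a₀ = (s : ℂ) ∧
      (-(starRingEnd ℂ) β₁ * stdForm a₀ a₁) * ((‖stdForm a₁ a₂‖ : ℂ)) ^ 2
        = stdForm a₀ a₁ * stdForm a₁ a₂ * stdForm a₂ a₀ ∧
      Real.sign s = Real.sign r := by
  rw [LinearIndependent.pair_iff] at hli
  -- φ(a₁,a₂) ≠ 0
  have hne : stdForm a₁ a₂ ≠ 0 := by
    intro hφ
    have hφ' := congrArg (starRingEnd ℂ) hφ
    simp only [stdForm, map_add, map_neg, map_mul, Complex.conj_conj, map_zero] at hφ hφ' h₁ h₂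
    have key : a₁ 0 * a₂ 1 - a₁ 1 * a₂ 0 = 0 := by
      rcases eq_or_ne (a₁ 0) 0 with hp | hp
      · rcases eq_or_ne (a₁ 1) 0 with hq | hq
        · have h10 : (1 : ℂ) • a₁ + (0 : ℂ) • a₂ = 0 := by
            funext i; fin_cases i <;> simp [hp, hq]
          exact absurd (hli 1 0 h10).1 one_ne_zero
        · have hq' : (starRingEnd ℂ) (a₁ 1) ≠ 0 := by simpa using hq
          have : (starRingEnd ℂ) (a₁ 1) * (a₁ 0 * a₂ 1 - a₁ 1 * a₂ 0) = 0 := by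
            linear_combination (-(a₂ 1)) * h₁ - (a₁ 1) * hφ'
          exact (mul_eq_zero.mp this).resolve_left hq'
      · have hp' : (starRingEnd ℂ) (a₁ 0) ≠ 0 := by simpa using hp
        have : (starRingEnd ℂ) (a₁ 0) * (a₁ 0 * a₂ 1 - a₁ 1 * a₂ 0) = 0 := by
          linear_combination (-(a₂ 0)) * h₁ - (a₁ 0) * hφ'
        exact (mul_eq_zero.mp this).resolve_left hp'
    have hdep : (a₂ 1) • a₁ + (-(a₁ 1)) • a₂ = 0 := by
      funext i
      fin_cases i
      · show a₂ 1 * a₁ 0 + -(a₁ 1) * a₂ 0 = 0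
        linear_combination key
      · show a₂ 1 * a₁ 1 + -(a₁ 1) * a₂ 1 = 0
        ring
    have hdep2 : (a₂ 0) • a₁ + (-(a₁ 0)) • a₂ = 0 := by
      funext i
      fin_cases i
      · show a₂ 0 * a₁ 0 + -(a₁ 0) * a₂ 0 = 0
        ring
      · show a₂ 0 * a₁ 1 + -(a₁ 0) * a₂ 1 = 0
        linear_combination -key
    have e1 := (hli (a₂ 1) (-(a₁ 1)) hdep).2
    have e0 := (hli (a₂ 0) (-(a₁ 0)) hdep2).2
    have hzero : (1 : ℂ) • a₁ + (0 : ℂ) • a₂ = 0 := by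
      funext i
      fin_cases i
      · show 1 * a₁ 0 + 0 * a₂ 0 = 0
        rw [neg_eq_zero.mp e0]; ring
      · show 1 * a₁ 1 + 0 * a₂ 1 = 0
        rw [neg_eq_zero.mp e1]; ring
    exact one_ne_zero (hli 1 0 hzero).1
  -- main computation
  set x := stdForm a₁ a₂ with hx
  have habs : ((‖x‖ : ℂ)) ^ 2 = x * (starRingEnd ℂ) x := by
    rw [Complex.mul_conj, ← Complex.sq_norm]
    norm_cast
  have e01 : stdForm a₀ a₁ = -β₂ * (starRingEnd ℂ) x := by
    rw [hβ, stdForm_expand_left, h₁, stdForm_swap a₁ a₂, ← hx]; ring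
  have e20 : stdForm a₂ a₀ = -((starRingEnd ℂ) β₁) * (starRingEnd ℂ) x := by
    rw [hβ, stdForm_expand_right, h₂, stdForm_swap a₁ a₂, ← hx]; ring
  have e00 : β₁ * (starRingEnd ℂ) β₂ * x = β₂ * (starRingEnd ℂ) β₁ * (starRingEnd ℂ) x := by
    have h := h₀
    rw [hβ, stdForm_expand_left, stdForm_expand_right, stdForm_expand_right, h₁, h₂,
      stdForm_swap a₁ a₂, ← hx] at h
    linear_combination h
  set f := -(starRingEnd ℂ) β₁ * stdForm a₀ a₁ with hfdef
  have hfr : (starRingEnd ℂ) f = f := by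
    rw [hfdef, e01]
    simp only [map_mul, map_neg, Complex.conj_conj]
    linear_combination e00
  have hf : f = (f.re : ℂ) := (Complex.conj_eq_iff_re.mp hfr).symm
  have eq3 : f * ((‖x‖ : ℂ)) ^ 2 = stdForm a₀ a₁ * x * stdForm a₂ a₀ := by
    rw [habs, hfdef, e01, e20]; ring
  have hk : (0 : ℝ) < ‖x‖ ^ 2 := pow_pos (norm_pos_iff.mpr hne) 2
  refine ⟨f.re, f.re * ‖x‖ ^ 2, hf, ?_, eq3, ?_⟩
  · rw [← eq3]
    nth_rewrite 1 [hf]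
    push_cast
    ring
  · rcases lt_trichotomy f.re 0 with h | h | h
    · rw [Real.sign_of_neg h, Real.sign_of_neg (mul_neg_of_neg_of_pos h hk)]
    · simp [h]
    · rw [Real.sign_of_pos h, Real.sign_of_pos (mul_pos h hk)]
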